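/- For the greedy-choice sequence with r = 2 and s = 1: for every real a with 0 < a < 2, if there exists an integer j > exp(3a/(2−a)) with p_j ≤ 1 − a/log(j+1), then p_k < 1 − a/log(k+1) for every integer k > j. -/
import Mathlib
set_option maxHeartbeats 1000000

lemma key17 (a L M K : ℝ) (ha : 0 < a) (hL1 : 1 ≤ L) (hLM : L ≤ M)
    (hML : M ≤ L + 1/3) (h3 : a*(L+3) < 2*L) (hX : 1 ≤ (M - L)*(K+1)) :
    (K+1)*(1 - a/L)^2 + 1 < K*(1 - a/M)^2 + 2*(1 - a/M) := by
  have hL0 : (0:ℝ) < L := by linarith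
  have hM0 : (0:ℝ) < M := by linarith
  have haL : a < L := by nlinarith
  have hE : K*(1 - a/M)^2 + 2*(1 - a/M) - ((K+1)*(1 - a/L)^2 + 1) =
      (((M - L)*(K+1))*(2*a*L*M - a^2*(M+L)) - a^2*L^2) / (L^2*M^2) := by
    field_simp
    ring
  have hpos1 : 0 < 2*a*L*M - a^2*(M+L) - a^2*L^2 := by
    nlinarith [mul_lt_mul_of_pos_left h3 (mul_pos ha hL0), mul_pos ha hL0,
      mul_nonneg (sub_nonneg.2 hLM) ha.le, sq_nonneg (M - L)]
  have hF : (0:ℝ) ≤ 2*a*L*M - a^2*(M+L) := by nlinarith [sq_nonneg (a*L)]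
  have hpos : 0 < ((M - L)*(K+1))*(2*a*L*M - a^2*(M+L)) - a^2*L^2 := by
    nlinarith [mul_le_mul_of_nonneg_right hX hF]
  have := div_pos hpos (by positivity : (0:ℝ) < L^2*M^2)
  linarith [hE ▸ this]

lemma step17 (p : ℕ → ℝ)
    (hp : ∀ k, 1 ≤ k → p k ∈ Set.Ioo (0 : ℝ) 1 ∧
      ((k : ℝ) + 1) * p (k - 1) ^ 2 - (k : ℝ) * p k ^ 2 - 2 * p k + 1 = 0)
    (a : ℝ) (ha : 0 < a) (ha2 : a < 2) (j m : ℕ)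
    (hj : Real.exp (3 * a / (2 - a)) < (j : ℝ)) (hjm : j ≤ m)
    (h : p m ≤ 1 - a / Real.log ((m : ℝ) + 1)) :
    p (m + 1) < 1 - a / Real.log (((m : ℝ) + 1) + 1) := by
  have h2a : (0:ℝ) < 2 - a := by linarith
  have hc : 0 < 3 * a / (2 - a) := by positivity
  have hj1 : (1:ℝ) < (j:ℝ) := lt_trans (by calc (1:ℝ) = Real.exp 0 := Real.exp_zero.symm
      _ < Real.exp (3*a/(2-a)) := Real.exp_lt_exp.2 hc) hj
  have hj2 : 2 ≤ j := by exact_mod_cast (by exact_mod_cast hj1 : (1:ℕ) < j)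
  have hm2 : (2:ℝ) ≤ (m:ℝ) := by exact_mod_cast le_trans hj2 hjm
  set L := Real.log ((m:ℝ) + 1) with hLdef
  set M := Real.log ((m:ℝ) + 2) with hMdef
  have hm1pos : (0:ℝ) < (m:ℝ) + 1 := by linarith
  have hm2pos : (0:ℝ) < (m:ℝ) + 2 := by linarith
  have hL1 : (1:ℝ) < L := (Real.lt_log_iff_exp_lt hm1pos).2 (by
        calc Real.exp 1 < 2.7182818286 := Real.exp_one_lt_d9
        _ ≤ (m:ℝ) + 1 := by linarith)
  have hLM : L ≤ M := Real.log_le_log hm1pos (by linarith)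
  have hdivpos : (0:ℝ) < ((m:ℝ)+2)/((m:ℝ)+1) := by positivity
  have hMLsub : M - L = Real.log (((m:ℝ)+2)/((m:ℝ)+1)) := by
    rw [Real.log_div (by linarith) (by linarith)]
  have hML : M ≤ L + 1/3 := by
    have := Real.log_le_sub_one_of_pos hdivpos
    rw [← hMLsub] at this
    have h1 : ((m:ℝ)+2)/((m:ℝ)+1) - 1 = 1/((m:ℝ)+1) := by field_simp; norm_num
    have h2 : 1/((m:ℝ)+1) ≤ 1/3 := by
      rw [div_le_div_iff₀ hm1pos (by norm_num)]; linarith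
    linarith [h1 ▸ this]
  have hXlow : 1/((m:ℝ)+2) ≤ M - L := by
    have hpos' : (0:ℝ) < ((m:ℝ)+1)/((m:ℝ)+2) := by positivity
    have := Real.log_le_sub_one_of_pos hpos'
    have hlm : Real.log (((m:ℝ)+1)/((m:ℝ)+2)) = L - M := by
      rw [Real.log_div (by linarith) (by linarith)]
    rw [hlm] at this
    have : L - M ≤ -(1/((m:ℝ)+2)) := by
      have h1 : ((m:ℝ)+1)/((m:ℝ)+2) - 1 = -(1/((m:ℝ)+2)) := by field_simp; norm_num
      linarith [h1 ▸ this]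
    linarith
  have hX : 1 ≤ (M - L)*(((m:ℝ)+1)+1) := by
    have := mul_le_mul_of_nonneg_right hXlow (le_of_lt hm2pos)
    rw [one_div, inv_mul_cancel₀ (ne_of_gt hm2pos)] at this
    calc (1:ℝ) ≤ (M - L)*((m:ℝ)+2) := this
      _ = (M - L)*(((m:ℝ)+1)+1) := by ring
  have hcL : 3*a/(2-a) < L := by
    have hjlog : 3*a/(2-a) < Real.log (j:ℝ) :=
      (Real.lt_log_iff_exp_lt (by linarith)).2 hj
    have : Real.log (j:ℝ) ≤ L := Real.log_le_log (by linarith) (by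
      have : (j:ℝ) ≤ (m:ℝ) := by exact_mod_cast hjm
      linarith)
    linarith
  have h3 : a*(L+3) < 2*L := by
    rw [div_lt_iff₀ h2a] at hcL
    nlinarith
  have haL : a < L := by nlinarith
  have hM0 : (0:ℝ) < M := by linarith
  have hs0 : (0:ℝ) < 1 - a/L := by
    rw [sub_pos, div_lt_one (by linarith)]; exact haL
  -- recurrence at index m+1
  obtain ⟨hmem, heq⟩ := hp (m+1) (by omega)
  rw [Nat.add_sub_cancel] at heq
  push_cast at heq
  obtain ⟨hqmem, _⟩ := hp m (by omega)
  have hq0 : 0 < p m := hqmem.1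
  have hq2 : p m ^ 2 ≤ (1 - a/L)^2 := by nlinarith
  have hkey := key17 a L M ((m:ℝ)+1) ha hL1.le hLM hML h3 hX
  have ht0 : (0:ℝ) < 1 - a/M := by
    rw [sub_pos, div_lt_one (by linarith)]; linarith
  have hlt : ((m:ℝ)+1) * p (m+1) ^ 2 + 2 * p (m+1) <
      ((m:ℝ)+1)*(1 - a/M)^2 + 2*(1 - a/M) := by
    have hmul := mul_le_mul_of_nonneg_left hq2 (le_of_lt hm2pos)
    linarith
  have hgoal : p (m+1) < 1 - a/M := by
    by_contra hcon
    push_neg at hcon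
    have h2 : (1 - a/M)^2 ≤ p (m+1)^2 := pow_le_pow_left₀ ht0.le hcon 2
    have h3' := mul_le_mul_of_nonneg_left h2 (by linarith : (0:ℝ) ≤ (m:ℝ)+1)
    linarith
  have : Real.log (((m:ℝ)+1)+1) = M := by rw [hMdef]; congr 1; ring
  rw [this]
  exact hgoal

theorem stmt_17 (p : ℕ → ℝ) (hp0 : p 0 = 0)
    (hp : ∀ k, 1 ≤ k → p k ∈ Set.Ioo (0 : ℝ) 1 ∧
      ((k : ℝ) + 1) * p (k - 1) ^ 2 - (k : ℝ) * p k ^ 2 - 2 * p k + 1 = 0) :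
    ∀ a : ℝ, 0 < a → a < 2 → ∀ j : ℕ, Real.exp (3 * a / (2 - a)) < (j : ℝ) →
      p j ≤ 1 - a / Real.log ((j : ℝ) + 1) →
      ∀ k : ℕ, j < k → p k < 1 - a / Real.log ((k : ℝ) + 1) := by
  intro a ha ha2 j hj hpj k hk
  induction k, hk using Nat.le_induction with
  | base =>
    have := step17 p hp a ha ha2 j j hj le_rfl hpj
    push_cast
    exact this
  | succ n hn ih =>
    have hjn : j ≤ n := le_of_lt hn
    have := step17 p hp a ha ha2 j n hj hjn ih.le
    push_cast
    exact this
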